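/- arXiv:1609.04105 — 2 statements merged into one kernel-verified Lean document; each statement's English description precedes it below -/
import Mathlib

section
/- Let G₁ and G₂ be kernels on R^n_+, each having the reflection properties (P1)–(P3) for every λ > 0, and define the composed kernel G(x, y) = ∫_{R^n_+} G₁(x, z) G₂(z, y) dz, assumed finite for all x ≠ y in R^n_+. Then G has property (P2): for every λ > 0 and all x, y ∈ Σ_λ with x ≠ y, G(x^λ, y^λ) − G(x, y) > |G(x^λ, y) − G(x, y^λ)|. -/
open MeasureTheory Filter Set Metric
open scoped ENNReal

noncomputable section

variable {n : ℕ}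

/-- Reflection of `x` about the hyperplane `x i = lam`. -/
def reflect (i : Fin n) (lam : ℝ) (x : EuclideanSpace ℝ (Fin n)) :
    EuclideanSpace ℝ (Fin n) :=
  WithLp.toLp 2 (Function.update x i (2 * lam - x i))

/-- The half space `R^n_+ = {x : x i > 0}` (with `i` the last coordinate). -/
def halfSpace (i : Fin n) : Set (EuclideanSpace ℝ (Fin n)) := {x | 0 < x i}

/-- `Σ_λ = {x ∈ R^n_+ : 0 < x i < λ}`. -/
def sigmaSlab (i : Fin n) (lam : ℝ) : Set (EuclideanSpace ℝ (Fin n)) :=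
  {x | 0 < x i ∧ x i < lam}

/-- Property (P1) of a kernel. -/
def PropP1 (i : Fin n) (K : EuclideanSpace ℝ (Fin n) → EuclideanSpace ℝ (Fin n) → ℝ) : Prop :=
  ∀ lam > (0 : ℝ), ∀ x ∈ sigmaSlab i lam, ∀ y ∈ sigmaSlab i lam, x ≠ y →
    max (K (reflect i lam x) y) (K x (reflect i lam y)) <
      K (reflect i lam x) (reflect i lam y)

/-- Property (P2) of a kernel. -/
def PropP2 (i : Fin n) (K : EuclideanSpace ℝ (Fin n) → EuclideanSpace ℝ (Fin n) → ℝ) : Prop :=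
  ∀ lam > (0 : ℝ), ∀ x ∈ sigmaSlab i lam, ∀ y ∈ sigmaSlab i lam, x ≠ y →
    |K (reflect i lam x) y - K x (reflect i lam y)| <
      K (reflect i lam x) (reflect i lam y) - K x y

/-- Property (P3) of a kernel. -/
def PropP3 (i : Fin n) (K : EuclideanSpace ℝ (Fin n) → EuclideanSpace ℝ (Fin n) → ℝ) : Prop :=
  ∀ lam > (0 : ℝ), ∀ x ∈ sigmaSlab i lam, ∀ y : EuclideanSpace ℝ (Fin n),
    0 < y i → lam ≤ y i → y ≠ reflect i lam x →
      K x y < K (reflect i lam x) y ∧ K y x < K y (reflect i lam x)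

/-- A kernel has the reflection properties (P1)-(P3). -/
def HasReflProps (i : Fin n) (K : EuclideanSpace ℝ (Fin n) → EuclideanSpace ℝ (Fin n) → ℝ) :
    Prop :=
  PropP1 i K ∧ PropP2 i K ∧ PropP3 i K

lemma reflect_apply_self (i : Fin n) (lam : ℝ) (x : EuclideanSpace ℝ (Fin n)) :
    reflect i lam x i = 2 * lam - x i :=
  Function.update_self i _ _

lemma reflect_reflect (i : Fin n) (lam : ℝ) (x : EuclideanSpace ℝ (Fin n)) :
    reflect i lam (reflect i lam x) = x := by
  unfold reflect
  ext j
  rcases eq_or_ne j i with rfl | h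
  · simp
  · simp [Function.update_of_ne h]

lemma reflect_injective (i : Fin n) (lam : ℝ) :
    Function.Injective (reflect i lam) := by
  intro a b h
  have := congrArg (reflect i lam) h
  simpa [reflect_reflect] using this

lemma measurePreserving_reflect (i : Fin n) (lam : ℝ) :
    MeasurePreserving (reflect i lam) volume volume := by
  classical
  set f : Fin n → ℝ → ℝ := fun j => if j = i then (fun t => 2 * lam - t) else id with hf
  have hfm : ∀ j, MeasurePreserving (f j) volume volume := by
    intro j
    by_cases h : j = i
    · have h1 : MeasurePreserving (fun t : ℝ => 2 * lam + -t) volume volume :=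
        (measurePreserving_add_left volume (2 * lam)).comp (Measure.measurePreserving_neg volume)
      simpa [hf, h, sub_eq_add_neg] using h1
    · simpa [hf, h] using MeasurePreserving.id (volume : Measure ℝ)
  have hpi : MeasurePreserving (fun (a : Fin n → ℝ) j => f j (a j)) volume volume := by
    rw [volume_pi]
    exact measurePreserving_pi _ _ hfm
  have comp := ((PiLp.volume_preserving_toLp (Fin n)).comp hpi).comp
    (PiLp.volume_preserving_ofLp (Fin n))
  have heq : ((WithLp.toLp 2 ∘
      (fun (a : Fin n → ℝ) j => f j (a j))) ∘ (WithLp.ofLp (p := 2) (V := Fin n → ℝ)))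
      = reflect i lam := by
    funext z
    ext j
    rcases eq_or_ne j i with rfl | h
    · simp [hf, reflect]
    · simp [hf, h, reflect, Function.update_of_ne h]
  rw [heq] at comp
  exact comp

def reflectEquiv (i : Fin n) (lam : ℝ) :
    EuclideanSpace ℝ (Fin n) ≃ᵐ EuclideanSpace ℝ (Fin n) where
  toFun := reflect i lam
  invFun := reflect i lam
  left_inv := reflect_reflect i lam
  right_inv := reflect_reflect i lam
  measurable_toFun := (measurePreserving_reflect i lam).measurable
  measurable_invFun := (measurePreserving_reflect i lam).measurable

lemma measurable_eval (i : Fin n) :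
    Measurable (fun z : EuclideanSpace ℝ (Fin n) => z i) :=
  (EuclideanSpace.proj (𝕜 := ℝ) i).continuous.measurable

lemma continuous_eval (i : Fin n) :
    Continuous (fun z : EuclideanSpace ℝ (Fin n) => z i) :=
  (EuclideanSpace.proj (𝕜 := ℝ) i).continuous

lemma key_pos (i : Fin n) {lam : ℝ} (hlam : 0 < lam)
    (f : EuclideanSpace ℝ (Fin n) → ℝ)
    (hf : IntegrableOn f (halfSpace i))
    (p q : EuclideanSpace ℝ (Fin n))
    (hpos1 : ∀ z : EuclideanSpace ℝ (Fin n), lam ≤ z i → z ≠ p → z ≠ q → 0 < f z)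
    (hpos2 : ∀ z ∈ sigmaSlab i lam, z ≠ reflect i lam p → z ≠ reflect i lam q →
      0 < f z + f (reflect i lam z)) :
    0 < ∫ z in halfSpace i, f z := by
  classical
  set S := sigmaSlab i lam with hS
  set W : Set (EuclideanSpace ℝ (Fin n)) := {z | lam ≤ z i} with hW
  have hSm : MeasurableSet S :=
    (measurableSet_lt measurable_const (measurable_eval i)).inter
      (measurableSet_lt (measurable_eval i) measurable_const)
  have hWm : MeasurableSet W := measurableSet_le measurable_const (measurable_eval i)
  have hdisj : Disjoint S W := by
    rw [Set.disjoint_left]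
    intro z hz hz'
    exact absurd hz.2 (not_lt.mpr hz')
  have hunion : halfSpace i = S ∪ W := by
    ext z
    constructor
    · intro hz
      rcases lt_or_ge (z i) lam with h | h
      · exact Or.inl ⟨hz, h⟩
      · exact Or.inr h
    · rintro (hz | hz)
      · exact hz.1
      · exact lt_of_lt_of_le hlam hz
  have hfS : IntegrableOn f S := hf.mono_set (by rw [hunion]; exact subset_union_left)
  have hfW : IntegrableOn f W := hf.mono_set (by rw [hunion]; exact subset_union_right)
  have hsplit : ∫ z in halfSpace i, f z = (∫ z in S, f z) + ∫ z in W, f z := by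
    rw [hunion]
    exact setIntegral_union hdisj hWm hfS hfW
  have hmp := measurePreserving_reflect i lam
  have hemb : MeasurableEmbedding (reflect i lam) :=
    (reflectEquiv i lam).measurableEmbedding
  set R := reflect i lam ⁻¹' S with hR
  have hRmem : ∀ z : EuclideanSpace ℝ (Fin n), z ∈ R ↔ lam < z i ∧ z i < 2 * lam := by
    intro z
    constructor
    · intro hz
      have h1 : 0 < reflect i lam z i ∧ reflect i lam z i < lam := hz
      rw [reflect_apply_self] at h1
      constructor <;> linarith [h1.1, h1.2]
    · intro hz
      have : 0 < reflect i lam z i ∧ reflect i lam z i < lam := by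
        rw [reflect_apply_self]
        constructor <;> linarith [hz.1, hz.2]
      exact this
  have hRm : MeasurableSet R := hSm.preimage hmp.measurable
  have hRW : R ⊆ W := fun z hz => le_of_lt ((hRmem z).mp hz).1
  have hrefl : ∫ z in S, f z = ∫ z in R, f (reflect i lam z) :=
    (hmp.setIntegral_preimage_emb hemb f S).symm
  have hgR : IntegrableOn (fun z => f (reflect i lam z)) R := by
    have := (hmp.integrableOn_comp_preimage hemb (f := f) (s := S)).mpr hfS
    exact this
  have hindint : IntegrableOn (R.indicator fun w => f (reflect i lam w)) W :=
    ((integrable_indicator_iff hRm).mpr hgR).integrableOn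
  have hiR : ∫ z in R, f (reflect i lam z)
      = ∫ z in W, R.indicator (fun w => f (reflect i lam w)) z := by
    rw [setIntegral_indicator hRm, Set.inter_eq_right.mpr hRW]
  set g : EuclideanSpace ℝ (Fin n) → ℝ :=
    fun z => f z + R.indicator (fun w => f (reflect i lam w)) z with hg
  have hWg : ∫ z in halfSpace i, f z = ∫ z in W, g z := by
    rw [hsplit, hrefl, hiR, hg]
    rw [integral_add hfW hindint]
    ring
  have hgint : IntegrableOn g W := hfW.add hindint
  have hgpos : ∀ z ∈ W \ ({p, q} : Set (EuclideanSpace ℝ (Fin n))), 0 < g z := by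
    rintro z ⟨hzW, hz2⟩
    simp only [Set.mem_insert_iff, Set.mem_singleton_iff, not_or] at hz2
    by_cases hzR : z ∈ R
    · have hwS : reflect i lam z ∈ S := hzR
      have h1 : reflect i lam z ≠ reflect i lam p := by
        intro h; exact hz2.1 (reflect_injective i lam h)
      have h2 : reflect i lam z ≠ reflect i lam q := by
        intro h; exact hz2.2 (reflect_injective i lam h)
      have := hpos2 (reflect i lam z) hwS h1 h2
      rw [reflect_reflect] at this
      rw [hg]
      simp only [Set.indicator_of_mem hzR]
      linarith
    · rw [hg]
      simp only [Set.indicator_of_notMem hzR, add_zero]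
      exact hpos1 z hzW hz2.1 hz2.2
  have hnontriv : Nontrivial (EuclideanSpace ℝ (Fin n)) := by
    refine ⟨EuclideanSpace.single i (1 : ℝ), 0, fun h => ?_⟩
    have := congrArg (fun z : EuclideanSpace ℝ (Fin n) => z i) h
    simp [EuclideanSpace.single_apply] at this
  haveI := hnontriv
  have hpair : (volume : Measure (EuclideanSpace ℝ (Fin n))) ({p, q} : Set _) = 0 :=
    (Set.toFinite ({p, q} : Set _)).measure_zero _
  have hae : 0 ≤ᵐ[(volume : Measure (EuclideanSpace ℝ (Fin n))).restrict W] g := by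
    rw [EventuallyLE, ae_restrict_iff' hWm]
    have hnm : ∀ᵐ z ∂(volume : Measure (EuclideanSpace ℝ (Fin n))),
        z ∉ ({p, q} : Set (EuclideanSpace ℝ (Fin n))) :=
      measure_eq_zero_iff_ae_notMem.mp hpair
    filter_upwards [hnm] with z hz hzW
    exact le_of_lt (hgpos z ⟨hzW, hz⟩)
  have hWpos : 0 < (volume : Measure (EuclideanSpace ℝ (Fin n))) W := by
    have hopen : IsOpen {z : EuclideanSpace ℝ (Fin n) | lam < z i} :=
      isOpen_lt continuous_const (continuous_eval i)
    have hne : ({z : EuclideanSpace ℝ (Fin n) | lam < z i}).Nonempty := by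
      refine ⟨EuclideanSpace.single i (lam + 1), ?_⟩
      have : EuclideanSpace.single i (lam + 1) i = lam + 1 := by
        simp [EuclideanSpace.single_apply]
      simp only [Set.mem_setOf_eq, this]
      linarith
    have := hopen.measure_pos (volume : Measure (EuclideanSpace ℝ (Fin n))) hne
    refine lt_of_lt_of_le this (measure_mono (fun z hz => ?_))
    exact le_of_lt (Set.mem_setOf_eq ▸ hz)
  have hsub2 : W \ ({p, q} : Set (EuclideanSpace ℝ (Fin n))) ⊆ Function.support g ∩ W := by
    intro z hz
    exact ⟨ne_of_gt (hgpos z hz), hz.1⟩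
  have hsupp : 0 < (volume : Measure (EuclideanSpace ℝ (Fin n))) (Function.support g ∩ W) := by
    refine lt_of_lt_of_le ?_ (measure_mono hsub2)
    rw [measure_diff_null hpair]
    exact hWpos
  rw [hWg]
  exact (setIntegral_pos_iff_support_of_nonneg_ae hae hgint).mpr hsupp


theorem composed_kernel_P2'
    (n : ℕ) (i : Fin n)
    (G₁ G₂ : EuclideanSpace ℝ (Fin n) → EuclideanSpace ℝ (Fin n) → ℝ)
    (h₁pos : ∀ x ∈ halfSpace i, ∀ y ∈ halfSpace i, 0 < G₁ x y)
    (h₂pos : ∀ x ∈ halfSpace i, ∀ y ∈ halfSpace i, 0 < G₂ x y)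
    (h₁P2 : PropP2 i G₁) (h₁P3 : PropP3 i G₁)
    (h₂P2 : PropP2 i G₂) (h₂P3 : PropP3 i G₂)
    (hint : ∀ x ∈ halfSpace i, ∀ y ∈ halfSpace i, x ≠ y →
      IntegrableOn (fun z => G₁ x z * G₂ z y) (halfSpace i)) :
    PropP2 i (fun x y => ∫ z in halfSpace i, G₁ x z * G₂ z y) := by
  intro lam hlam x hx y hy hxy
  dsimp only
  obtain ⟨hx0, hxl⟩ := hx
  obtain ⟨hy0, hyl⟩ := hy
  set xr := reflect i lam x with hxrdef
  set yr := reflect i lam y with hyrdef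
  have hxri : xr i = 2 * lam - x i := reflect_apply_self i lam x
  have hyri : yr i = 2 * lam - y i := reflect_apply_self i lam y
  have hxH : x ∈ halfSpace i := hx0
  have hyH : y ∈ halfSpace i := hy0
  have hxrH : xr ∈ halfSpace i := by
    show 0 < xr i; rw [hxri]; linarith
  have hyrH : yr ∈ halfSpace i := by
    show 0 < yr i; rw [hyri]; linarith
  have hxS : x ∈ sigmaSlab i lam := ⟨hx0, hxl⟩
  have hyS : y ∈ sigmaSlab i lam := ⟨hy0, hyl⟩
  have hne1 : xr ≠ yr := fun h => hxy (reflect_injective i lam h)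
  have hne2 : x ≠ yr := by
    intro h
    have := congrArg (fun z : EuclideanSpace ℝ (Fin n) => z i) h
    simp only [hyri] at this
    linarith
  have hne3 : xr ≠ y := by
    intro h
    have := congrArg (fun z : EuclideanSpace ℝ (Fin n) => z i) h
    simp only [hxri] at this
    linarith
  have I1 := hint xr hxrH yr hyrH hne1
  have I2 := hint x hxH yr hyrH hne2
  have I3 := hint xr hxrH y hyH hne3
  have I4 := hint x hxH y hyH hxy
  -- Q2 : sum form with G₁ summed, G₂ differenced
  have J1 : Integrable (fun z => G₁ xr z * G₂ z yr - G₁ xr z * G₂ z y)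
      (volume.restrict (halfSpace i)) := I1.sub I3
  have J2 : Integrable (fun z => G₁ x z * G₂ z yr - G₁ x z * G₂ z y)
      (volume.restrict (halfSpace i)) := I2.sub I4
  have hfun2 : (fun z => (G₁ xr z + G₁ x z) * (G₂ z yr - G₂ z y))
      = fun z => (G₁ xr z * G₂ z yr - G₁ xr z * G₂ z y)
        + (G₁ x z * G₂ z yr - G₁ x z * G₂ z y) := funext fun z => by ring
  have hQ2eq : (∫ z in halfSpace i, (G₁ xr z + G₁ x z) * (G₂ z yr - G₂ z y))
      = ((∫ z in halfSpace i, G₁ xr z * G₂ z yr) - ∫ z in halfSpace i, G₁ xr z * G₂ z y)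
      + ((∫ z in halfSpace i, G₁ x z * G₂ z yr) - ∫ z in halfSpace i, G₁ x z * G₂ z y) := by
    rw [hfun2, integral_add J1 J2, integral_sub I1 I3, integral_sub I2 I4]
  have hQ2int : IntegrableOn (fun z => (G₁ xr z + G₁ x z) * (G₂ z yr - G₂ z y))
      (halfSpace i) := by
    rw [hfun2]; exact J1.add J2
  have hQ2pos : 0 < ∫ z in halfSpace i, (G₁ xr z + G₁ x z) * (G₂ z yr - G₂ z y) := by
    refine key_pos i hlam _ hQ2int xr yr ?_ ?_
    · -- z with lam ≤ z i, z ≠ xr, z ≠ yr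
      intro z hzlam hzx hzy
      have hz0 : 0 < z i := lt_of_lt_of_le hlam hzlam
      have hzH : z ∈ halfSpace i := hz0
      have h2 := (h₂P3 lam hlam y hyS z hz0 hzlam (by rw [← hyrdef]; exact hzy)).2
      have h1 : 0 < G₁ xr z + G₁ x z :=
        add_pos (h₁pos xr hxrH z hzH) (h₁pos x hxH z hzH)
      have : 0 < G₂ z yr - G₂ z y := by rw [hyrdef] at *; linarith
      exact mul_pos h1 this
    · -- fold on the slab
      intro z hzS hz1 hz2
      have hzx : z ≠ x := by rw [← reflect_reflect i lam x, ← hxrdef]; exact hz1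
      have hzy : z ≠ y := by rw [← reflect_reflect i lam y, ← hyrdef]; exact hz2
      obtain ⟨hz0, hzl⟩ := hzS
      set zr := reflect i lam z with hzrdef
      have hzri : zr i = 2 * lam - z i := reflect_apply_self i lam z
      have hzH : z ∈ halfSpace i := hz0
      have hzr0 : 0 < zr i := by rw [hzri]; linarith
      have hzrlam : lam ≤ zr i := by rw [hzri]; linarith
      have hzrH : zr ∈ halfSpace i := hzr0
      -- a > 0
      have ha : 0 < G₁ xr z + G₁ x z :=
        add_pos (h₁pos xr hxrH z hzH) (h₁pos x hxH z hzH)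
      -- b' > 0
      have hzryr : zr ≠ yr := by
        intro h; exact hzy (reflect_injective i lam (by rw [← hzrdef, ← hyrdef]; exact h))
      have hb' : 0 < G₂ zr yr - G₂ zr y := by
        have := (h₂P3 lam hlam y hyS zr hzr0 hzrlam (by rw [← hyrdef]; exact hzryr)).2
        linarith
      -- b + b' > 0 from P2 of G₂ at (z,y)
      have habs2 := h₂P2 lam hlam z ⟨hz0, hzl⟩ y hyS hzy
      rw [← hzrdef, ← hyrdef] at habs2
      have hbb : 0 < (G₂ z yr - G₂ z y) + (G₂ zr yr - G₂ zr y) := by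
        have h := le_abs_self (G₂ zr y - G₂ z yr)
        linarith
      -- a' - a > 0 from P2 of G₁ at (x,z)
      have habs1 := h₁P2 lam hlam x hxS z ⟨hz0, hzl⟩ (fun h => hzx h.symm)
      rw [← hzrdef, ← hxrdef] at habs1
      have haa : 0 < (G₁ xr zr + G₁ x zr) - (G₁ xr z + G₁ x z) := by
        have h := le_abs_self (G₁ xr z - G₁ x zr)
        linarith
      nlinarith [mul_pos ha hbb, mul_pos haa hb']
  -- Q1 : G₁ differenced, G₂ summed
  have K1 : Integrable (fun z => G₁ xr z * G₂ z yr - G₁ x z * G₂ z yr)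
      (volume.restrict (halfSpace i)) := I1.sub I2
  have K2 : Integrable (fun z => G₁ xr z * G₂ z y - G₁ x z * G₂ z y)
      (volume.restrict (halfSpace i)) := I3.sub I4
  have hfun1 : (fun z => (G₁ xr z - G₁ x z) * (G₂ z yr + G₂ z y))
      = fun z => (G₁ xr z * G₂ z yr - G₁ x z * G₂ z yr)
        + (G₁ xr z * G₂ z y - G₁ x z * G₂ z y) := funext fun z => by ring
  have hQ1eq : (∫ z in halfSpace i, (G₁ xr z - G₁ x z) * (G₂ z yr + G₂ z y))
      = ((∫ z in halfSpace i, G₁ xr z * G₂ z yr) - ∫ z in halfSpace i, G₁ x z * G₂ z yr)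
      + ((∫ z in halfSpace i, G₁ xr z * G₂ z y) - ∫ z in halfSpace i, G₁ x z * G₂ z y) := by
    rw [hfun1, integral_add K1 K2, integral_sub I1 I2, integral_sub I3 I4]
  have hQ1int : IntegrableOn (fun z => (G₁ xr z - G₁ x z) * (G₂ z yr + G₂ z y))
      (halfSpace i) := by
    rw [hfun1]; exact K1.add K2
  have hQ1pos : 0 < ∫ z in halfSpace i, (G₁ xr z - G₁ x z) * (G₂ z yr + G₂ z y) := by
    refine key_pos i hlam _ hQ1int xr yr ?_ ?_
    · intro z hzlam hzx _
      have hz0 : 0 < z i := lt_of_lt_of_le hlam hzlam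
      have hzH : z ∈ halfSpace i := hz0
      have h1 := (h₁P3 lam hlam x hxS z hz0 hzlam (by rw [← hxrdef]; exact hzx)).1
      rw [← hxrdef] at h1
      have h2 : 0 < G₂ z yr + G₂ z y :=
        add_pos (h₂pos z hzH yr hyrH) (h₂pos z hzH y hyH)
      have : 0 < G₁ xr z - G₁ x z := by linarith
      exact mul_pos this h2
    · intro z hzS hz1 hz2
      have hzx : z ≠ x := by rw [← reflect_reflect i lam x, ← hxrdef]; exact hz1
      have hzy : z ≠ y := by rw [← reflect_reflect i lam y, ← hyrdef]; exact hz2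
      obtain ⟨hz0, hzl⟩ := hzS
      set zr := reflect i lam z with hzrdef
      have hzri : zr i = 2 * lam - z i := reflect_apply_self i lam z
      have hzH : z ∈ halfSpace i := hz0
      have hzr0 : 0 < zr i := by rw [hzri]; linarith
      have hzrlam : lam ≤ zr i := by rw [hzri]; linarith
      have hzrH : zr ∈ halfSpace i := hzr0
      -- d > 0
      have hd : 0 < G₂ z yr + G₂ z y :=
        add_pos (h₂pos z hzH yr hyrH) (h₂pos z hzH y hyH)
      -- c' > 0
      have hzrxr : zr ≠ xr := by
        intro h; exact hzx (reflect_injective i lam (by rw [← hzrdef, ← hxrdef]; exact h))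
      have hc' : 0 < G₁ xr zr - G₁ x zr := by
        have := (h₁P3 lam hlam x hxS zr hzr0 hzrlam (by rw [← hxrdef]; exact hzrxr)).1
        rw [← hxrdef] at this
        linarith
      -- c + c' > 0 from P2 of G₁ at (x,z)
      have habs1 := h₁P2 lam hlam x hxS z ⟨hz0, hzl⟩ (fun h => hzx h.symm)
      rw [← hzrdef, ← hxrdef] at habs1
      have hcc : 0 < (G₁ xr z - G₁ x z) + (G₁ xr zr - G₁ x zr) := by
        have h := neg_abs_le (G₁ xr z - G₁ x zr)
        linarith [abs_nonneg (G₁ xr z - G₁ x zr), le_abs_self (G₁ x zr - G₁ xr z),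
          abs_sub_comm (G₁ xr z) (G₁ x zr)]
      -- d' - d > 0 from P2 of G₂ at (z,y)
      have habs2 := h₂P2 lam hlam z ⟨hz0, hzl⟩ y hyS hzy
      rw [← hzrdef, ← hyrdef] at habs2
      have hdd : 0 < (G₂ zr yr + G₂ zr y) - (G₂ z yr + G₂ z y) := by
        have h := le_abs_self (G₂ z yr - G₂ zr y)
        linarith [abs_sub_comm (G₂ zr y) (G₂ z yr)]
      nlinarith [mul_pos hcc hd, mul_pos hc' hdd]
  have h1 := hQ1pos
  rw [hQ1eq] at h1
  have h2 := hQ2pos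
  rw [hQ2eq] at h2
  rw [abs_lt]
  constructor
  · linarith
  · linarith

/-- the composed kernel `G(x,y) = ∫_{R^n_+} G₁(x,z) G₂(z,y) dz`
inherits property (P2). -/
theorem composed_kernel_P2
    (n : ℕ) (i : Fin n) (hi : (i : ℕ) = n - 1) (hn : 2 ≤ n)
    (G₁ G₂ : EuclideanSpace ℝ (Fin n) → EuclideanSpace ℝ (Fin n) → ℝ)
    (h₁pos : ∀ x ∈ halfSpace i, ∀ y ∈ halfSpace i, 0 < G₁ x y)
    (h₂pos : ∀ x ∈ halfSpace i, ∀ y ∈ halfSpace i, 0 < G₂ x y)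
    (h₁ : HasReflProps i G₁) (h₂ : HasReflProps i G₂)
    (hint : ∀ x ∈ halfSpace i, ∀ y ∈ halfSpace i, x ≠ y →
      IntegrableOn (fun z => G₁ x z * G₂ z y) (halfSpace i)) :
    PropP2 i (fun x y => ∫ z in halfSpace i, G₁ x z * G₂ z y) := by
  obtain ⟨_, h₁P2, h₁P3⟩ := h₁
  obtain ⟨_, h₂P2, h₂P3⟩ := h₂
  exact composed_kernel_P2' n i G₁ G₂ h₁pos h₂pos h₁P2 h₁P3 h₂P2 h₂P3 hint
end
end

section
/- Let G be a kernel on R^n_+ having the reflection properties (P1)–(P3) for every λ > 0, let p > 0, and let u : R^n_+ → [0, ∞) be measurable with u(x) = ∫_{R^n_+} G(x, y) u(y)^p dy < ∞ for every x ∈ R^n_+. Fix λ > 0 and set u_λ(x) = u(x^λ), w_λ = u_λ − u. If w_λ(y) ≥ 0 for almost every y ∈ Σ_λ and w_λ > 0 on a subset D ⊆ Σ_λ of positive Lebesgue measure, then w_λ(x) > 0 for every x ∈ Σ_λ. -/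
open MeasureTheory Filter Set Metric
open scoped ENNReal

noncomputable section

variable {n : ℕ}

namespace ReflAux

variable (i : Fin n) (lam : ℝ)

lemma reflect_i (x : EuclideanSpace ℝ (Fin n)) : reflect i lam x i = 2 * lam - x i := by
  simp [reflect]

lemma reflect_invol : Function.Involutive (reflect i lam) := by
  intro x
  ext j
  rcases eq_or_ne j i with rfl | h
  · simp [reflect]
  · simp [reflect, Function.update_of_ne h]

lemma measurable_reflect : Measurable (reflect i lam) := by
  refine (WithLp.measurable_toLp 2 (Fin n → ℝ)).comp
    (f := fun x : EuclideanSpace ℝ (Fin n) => Function.update x.ofLp i (2 * lam - x.ofLp i)) ?_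
  apply measurable_pi_lambda
  intro j
  rcases eq_or_ne j i with rfl | h
  · simp only [Function.update_self]
    fun_prop
  · simp only [Function.update_of_ne h]
    fun_prop

def reflectEquiv : EuclideanSpace ℝ (Fin n) ≃ᵐ EuclideanSpace ℝ (Fin n) where
  toFun := reflect i lam
  invFun := reflect i lam
  left_inv := reflect_invol i lam
  right_inv := reflect_invol i lam
  measurable_toFun := measurable_reflect i lam
  measurable_invFun := measurable_reflect i lam

lemma reflect_embedding : MeasurableEmbedding (reflect i lam) :=
  (reflectEquiv i lam).measurableEmbedding

lemma measurePreserving_reflect :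
    MeasurePreserving (reflect i lam) volume volume := by
  classical
  have h1 : MeasurePreserving (fun (a : Fin n → ℝ) (j : Fin n) =>
      (if j = i then (fun t : ℝ => 2 * lam - t) else id) (a j)) volume volume := by
    apply volume_preserving_pi
    intro j
    by_cases h : j = i
    · simpa [h] using Measure.measurePreserving_sub_left (volume : Measure ℝ) (2 * lam)
    · simpa [h] using MeasurePreserving.id (volume : Measure ℝ)
  have h2 : (fun (a : Fin n → ℝ) (j : Fin n) =>
      (if j = i then (fun t : ℝ => 2 * lam - t) else id) (a j))
      = fun (a : Fin n → ℝ) => Function.update a i (2 * lam - a i) := by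
    funext a j
    rcases eq_or_ne j i with rfl | h
    · simp
    · simp [h, Function.update_of_ne h]
  rw [h2] at h1
  have e := EuclideanSpace.volume_preserving_symm_measurableEquiv_toLp (Fin n)
  have e' := (EuclideanSpace.volume_preserving_symm_measurableEquiv_toLp (Fin n)).symm
  exact (e'.comp h1).comp e

lemma volume_hyperplane (c : ℝ) :
    volume {y : EuclideanSpace ℝ (Fin n) | y i = c} = 0 := by
  have e := (EuclideanSpace.volume_preserving_symm_measurableEquiv_toLp (Fin n)).symm
  have hev : Measurable fun y : EuclideanSpace ℝ (Fin n) => y i := (measurable_pi_apply i).comp (WithLp.measurable_ofLp 2 _)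
  have hs : MeasurableSet {y : EuclideanSpace ℝ (Fin n) | y i = c} :=
    hev (measurableSet_singleton c)
  rw [← e.measure_preimage hs.nullMeasurableSet]
  have hset : (⇑(MeasurableEquiv.toLp 2 (Fin n → ℝ)).symm.symm) ⁻¹'
      {y : EuclideanSpace ℝ (Fin n) | y i = c} = {g : Fin n → ℝ | g i = c} := rfl
  rw [hset]
  rw [volume_pi]
  exact Measure.pi_hyperplane (fun _ : Fin n => (volume : Measure ℝ)) i c

lemma volume_singleton (i : Fin n) (z : EuclideanSpace ℝ (Fin n)) :
    volume ({z} : Set (EuclideanSpace ℝ (Fin n))) = 0 := by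
  refine measure_mono_null ?_ (volume_hyperplane i (z i))
  intro y hy
  simp only [mem_singleton_iff] at hy
  simp [hy]

end ReflAux

set_option maxHeartbeats 1000000 in
/-- if `w_λ ≥ 0` a.e. on `Σ_λ` and `w_λ > 0` on a set of positive
measure, then `w_λ > 0` everywhere on `Σ_λ`. -/
theorem w_lambda_strictly_positive
    (n : ℕ) (i : Fin n) (hi : (i : ℕ) = n - 1) (hn : 2 ≤ n)
    (G : EuclideanSpace ℝ (Fin n) → EuclideanSpace ℝ (Fin n) → ℝ)
    (hGpos : ∀ x ∈ halfSpace i, ∀ y ∈ halfSpace i, 0 < G x y)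
    (hGrefl : HasReflProps i G)
    (p : ℝ) (hp : 0 < p)
    (u : EuclideanSpace ℝ (Fin n) → ℝ) (hu_meas : Measurable u)
    (hu_nonneg : ∀ x ∈ halfSpace i, 0 ≤ u x)
    (hu_int : ∀ x ∈ halfSpace i, IntegrableOn (fun y => G x y * u y ^ p) (halfSpace i))
    (hu_eq : ∀ x ∈ halfSpace i, u x = ∫ y in halfSpace i, G x y * u y ^ p)
    (lam : ℝ) (hlam : 0 < lam)
    (hae : ∀ᵐ y ∂(volume.restrict (sigmaSlab i lam)),
      0 ≤ u (reflect i lam y) - u y)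
    (hD : ∃ D ⊆ sigmaSlab i lam, 0 < volume D ∧
      ∀ y ∈ D, 0 < u (reflect i lam y) - u y) :
    ∀ x ∈ sigmaSlab i lam, 0 < u (reflect i lam x) - u x := by
  
  classical
  obtain ⟨hP1, hP2, hP3⟩ := hGrefl
  intro x hx
  obtain ⟨hx0, hxlam⟩ := hx
  set R := reflect i lam with hRdef
  have hRi : ∀ y : EuclideanSpace ℝ (Fin n), R y i = 2 * lam - y i := fun y =>
    ReflAux.reflect_i i lam y
  -- measurability of basic sets
  have hev : Measurable fun y : EuclideanSpace ℝ (Fin n) => y i := (measurable_pi_apply i).comp (WithLp.measurable_ofLp 2 _)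
  have hmeasH : MeasurableSet (halfSpace i) := measurableSet_lt measurable_const hev
  have hmeasA : MeasurableSet (sigmaSlab i lam) := by
    have : sigmaSlab i lam = {y : EuclideanSpace ℝ (Fin n) | 0 < y i} ∩ {y | y i < lam} := rfl
    rw [this]
    exact (measurableSet_lt measurable_const hev).inter (measurableSet_lt hev measurable_const)
  set A := sigmaSlab i lam with hAdef
  set B := {y : EuclideanSpace ℝ (Fin n) | lam < y i} with hBdef
  set B1 := {y : EuclideanSpace ℝ (Fin n) | lam < y i ∧ y i < 2 * lam} with hB1def
  set B2 := {y : EuclideanSpace ℝ (Fin n) | 2 * lam ≤ y i} with hB2def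
  have hmeasB : MeasurableSet B := measurableSet_lt measurable_const hev
  have hmeasB1 : MeasurableSet B1 := by
    have : B1 = {y : EuclideanSpace ℝ (Fin n) | lam < y i} ∩ {y | y i < 2 * lam} := rfl
    rw [this]
    exact (measurableSet_lt measurable_const hev).inter (measurableSet_lt hev measurable_const)
  have hmeasB2 : MeasurableSet B2 := measurableSet_le measurable_const hev
  -- membership facts
  have hxH : x ∈ halfSpace i := hx0
  have hRxi : R x i = 2 * lam - x i := hRi x
  have hRxH : R x ∈ halfSpace i := by
    show 0 < R x i
    rw [hRxi]; linarith
  -- the integrand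
  set f : EuclideanSpace ℝ (Fin n) → ℝ :=
    fun y => G (R x) y * u y ^ p - G x y * u y ^ p with hfdef
  have hfint : IntegrableOn f (halfSpace i) := (hu_int (R x) hRxH).sub (hu_int x hxH)
  have hAsubH : A ⊆ halfSpace i := fun y hy => hy.1
  have hBsubH : B ⊆ halfSpace i := fun y hy => lt_trans hlam hy
  have hB1subB : B1 ⊆ B := fun y hy => hy.1
  have hB2subB : B2 ⊆ B := fun y hy => by
    show lam < y i
    have : (2 : ℝ) * lam ≤ y i := hy
    linarith
  have hfintA : IntegrableOn f A := hfint.mono_set hAsubH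
  have hfintB : IntegrableOn f B := hfint.mono_set hBsubH
  have hfintB1 : IntegrableOn f B1 := hfintB.mono_set hB1subB
  have hfintB2 : IntegrableOn f B2 := hfintB.mono_set hB2subB
  -- w(x) as an integral
  have hw : u (R x) - u x = ∫ y in halfSpace i, f y := by
    rw [hu_eq (R x) hRxH, hu_eq x hxH, ← integral_sub (hu_int (R x) hRxH) (hu_int x hxH)]
  -- split the half space
  have hHsplit : (halfSpace i : Set (EuclideanSpace ℝ (Fin n))) =ᵐ[volume]
      ((A ∪ B : Set (EuclideanSpace ℝ (Fin n)))) := by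
    rw [MeasureTheory.ae_eq_set]
    constructor
    · refine measure_mono_null ?_ (ReflAux.volume_hyperplane i lam)
      intro y hy
      obtain ⟨hy1, hy2⟩ := hy
      have h1 : 0 < y i := hy1
      simp only [mem_union, not_or] at hy2
      obtain ⟨hyA, hyB⟩ := hy2
      have h2 : ¬ (lam < y i) := hyB
      have h3 : ¬ (0 < y i ∧ y i < lam) := hyA
      show y i = lam
      by_contra hne
      rcases lt_or_gt_of_ne hne with h | h
      · exact h3 ⟨h1, h⟩
      · exact h2 h
    · have : (A ∪ B) \ halfSpace i = ∅ := by
        rw [diff_eq_empty]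
        exact union_subset hAsubH hBsubH
      rw [this]
      exact measure_empty
  have hsplit1 : ∫ y in halfSpace i, f y = (∫ y in A, f y) + ∫ y in B, f y := by
    rw [setIntegral_congr_set hHsplit]
    refine setIntegral_union (Set.disjoint_left.mpr ?_) hmeasB hfintA hfintB
    intro y hyA hyB
    have h1 : y i < lam := hyA.2
    have h2 : lam < y i := hyB
    linarith
  have hBsplit : B = B1 ∪ B2 := by
    ext y
    simp only [hBdef, hB1def, hB2def, mem_setOf_eq, mem_union]
    constructor
    · intro h
      rcases lt_or_ge (y i) (2 * lam) with h2 | h2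
      · exact Or.inl ⟨h, h2⟩
      · exact Or.inr h2
    · rintro (⟨h, _⟩ | h) <;> linarith
  have hsplit2 : ∫ y in B, f y = (∫ y in B1, f y) + ∫ y in B2, f y := by
    rw [hBsplit]
    refine setIntegral_union (Set.disjoint_left.mpr ?_) hmeasB2 hfintB1 hfintB2
    intro y hyA hyB
    have h1 : y i < 2 * lam := hyA.2
    have h2 : 2 * lam ≤ y i := hyB
    linarith
  -- change of variables on B1
  have hRmp := ReflAux.measurePreserving_reflect i lam
  have hRemb := ReflAux.reflect_embedding i lam
  have hpre : R ⁻¹' B1 = A := by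
    ext y
    simp only [mem_preimage, hB1def, hAdef, mem_setOf_eq, sigmaSlab, hRi y]
    constructor <;> rintro ⟨h1, h2⟩ <;> constructor <;> linarith
  have hchange : ∫ y in B1, f y = ∫ y in A, f (R y) := by
    rw [← hRmp.setIntegral_preimage_emb hRemb f B1, hpre]
  have hintcomp : IntegrableOn (fun y => f (R y)) A := by
    have := (hRmp.integrableOn_comp_preimage hRemb (f := f) (s := B1)).mpr hfintB1
    rw [hpre] at this
    exact this
  -- the symmetrized integrand on A
  set F : EuclideanSpace ℝ (Fin n) → ℝ := fun y => f y + f (R y) with hFdef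
  have hFintA : IntegrableOn F A := hfintA.add hintcomp
  have hsplit3 : (∫ y in A, f y) + ∫ y in B1, f y = ∫ y in A, F y := by
    rw [hchange, ← integral_add hfintA hintcomp]
  -- pointwise key lemma on A
  have key : ∀ y ∈ A, y ≠ x → u y ≤ u (R y) →
      (0 ≤ F y ∧ (u y < u (R y) → 0 < F y)) := by
    intro y hy hyx hmono
    have hyH : y ∈ halfSpace i := hy.1
    have hy0 : 0 ≤ u y := hu_nonneg y hyH
    have hxy : x ≠ y := fun h => hyx h.symm
    have h1 := hP1 lam hlam x ⟨hx0, hxlam⟩ y hy hxy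
    have h2 := hP2 lam hlam x ⟨hx0, hxlam⟩ y hy hxy
    have hg2 : 0 < G (R x) (R y) - G x (R y) := by
      have := le_max_right (G (R x) y) (G x (R y))
      have := lt_of_le_of_lt this h1
      linarith
    have hsum : 0 < (G (R x) y - G x y) + (G (R x) (R y) - G x (R y)) := by
      rw [abs_lt] at h2
      have := h2.1
      linarith
    have ha : 0 ≤ u y ^ p := Real.rpow_nonneg hy0 p
    have hab : u y ^ p ≤ u (R y) ^ p := Real.rpow_le_rpow hy0 hmono hp.le
    have hFy : F y = (G (R x) y - G x y) * u y ^ p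
        + (G (R x) (R y) - G x (R y)) * u (R y) ^ p := by
      simp only [hFdef, hfdef]
      ring
    constructor
    · rw [hFy]
      nlinarith [mul_nonneg hg2.le (sub_nonneg.mpr hab), mul_nonneg hsum.le ha]
    · intro hlt
      have hab' : u y ^ p < u (R y) ^ p := Real.rpow_lt_rpow hy0 hlt hp
      rw [hFy]
      nlinarith [mul_pos hg2 (sub_pos.mpr hab'), mul_nonneg hsum.le ha]
  -- a.e. facts
  have hx_ae : ∀ᵐ y : EuclideanSpace ℝ (Fin n) ∂volume, y ≠ x := by
    rw [ae_iff]
    push_neg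
    simpa using ReflAux.volume_singleton i x
  have haeA : ∀ᵐ y ∂(volume : Measure (EuclideanSpace ℝ (Fin n))),
      y ∈ A → 0 ≤ u (R y) - u y := (ae_restrict_iff' hmeasA).mp hae
  have hFnonneg : 0 ≤ᵐ[volume.restrict A] F := by
    rw [EventuallyLE, ae_restrict_iff' hmeasA]
    filter_upwards [haeA, hx_ae] with y h1 h2 hyA
    exact (key y hyA h2 (by linarith [h1 hyA])).1
  have hIA_nonneg : 0 ≤ ∫ y in A, F y := integral_nonneg_of_ae hFnonneg
  -- strict positivity of ∫_A F
  have hIA_pos : 0 < ∫ y in A, F y := by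
    rcases hIA_nonneg.lt_or_eq with h | h
    · exact h
    · exfalso
      have hzero : F =ᵐ[volume.restrict A] 0 :=
        (integral_eq_zero_iff_of_nonneg_ae hFnonneg hFintA).mp h.symm
      have hzero' : ∀ᵐ y ∂(volume : Measure (EuclideanSpace ℝ (Fin n))),
          y ∈ A → F y = 0 := (ae_restrict_iff' hmeasA).mp hzero
      obtain ⟨D, hDsub, hDpos, hDlt⟩ := hD
      have hall : ∀ᵐ y ∂(volume : Measure (EuclideanSpace ℝ (Fin n))),
          (y ∈ A → (F y = 0 ∧ 0 ≤ u (R y) - u y)) ∧ y ≠ x := by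
        filter_upwards [hzero', haeA, hx_ae] with y h1 h2 h3
        exact ⟨fun hyA => ⟨h1 hyA, h2 hyA⟩, h3⟩
      rw [ae_iff] at hall
      have hDD : volume (D \ {y | ¬ ((y ∈ A → (F y = 0 ∧ 0 ≤ u (R y) - u y)) ∧ y ≠ x)}) ≠ 0 := by
        intro hzero2
        have hsub : D ⊆ (D \ {y | ¬ ((y ∈ A → (F y = 0 ∧ 0 ≤ u (R y) - u y)) ∧ y ≠ x)})
            ∪ {y | ¬ ((y ∈ A → (F y = 0 ∧ 0 ≤ u (R y) - u y)) ∧ y ≠ x)} := by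
          intro y hy
          by_cases hb : y ∈ {y | ¬ ((y ∈ A → (F y = 0 ∧ 0 ≤ u (R y) - u y)) ∧ y ≠ x)}
          · exact Or.inr hb
          · exact Or.inl ⟨hy, hb⟩
        have hle : volume D ≤ volume (D \ {y | ¬ ((y ∈ A → (F y = 0 ∧ 0 ≤ u (R y) - u y)) ∧ y ≠ x)})
            + volume {y | ¬ ((y ∈ A → (F y = 0 ∧ 0 ≤ u (R y) - u y)) ∧ y ≠ x)} :=
          le_trans (measure_mono hsub) (measure_union_le _ _)
        rw [hzero2, hall] at hle
        simp at hle
        exact absurd hle (ne_of_gt hDpos)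
      obtain ⟨y, hyD, hygood⟩ := nonempty_of_measure_ne_zero hDD
      simp only [mem_setOf_eq, not_not] at hygood
      have hyA : y ∈ A := hDsub hyD
      obtain ⟨hgood, hyx⟩ := hygood
      obtain ⟨hF0, hmono⟩ := hgood hyA
      have hlt := hDlt y hyD
      have := (key y hyA hyx (by linarith)).2 (by linarith)
      rw [hF0] at this
      exact lt_irrefl 0 this
  -- nonnegativity of the B2 integral
  have hB2nonneg : 0 ≤ ∫ y in B2, f y := by
    refine setIntegral_nonneg hmeasB2 ?_
    intro y hy
    have hyi : 2 * lam ≤ y i := hy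
    have hyH : y ∈ halfSpace i := hB2subB hy |> hBsubH
    have hy0 : (0 : ℝ) < y i := hyH
    have hyne : y ≠ R x := by
      intro h
      have : y i = 2 * lam - x i := by rw [h, hRxi]
      linarith
    have h3 := (hP3 lam hlam x ⟨hx0, hxlam⟩ y hy0 (by linarith) hyne).1
    have hc : 0 ≤ u y ^ p := Real.rpow_nonneg (hu_nonneg y hyH) p
    simp only [hfdef]
    nlinarith [mul_nonneg (sub_nonneg.mpr h3.le) hc]
  -- assemble
  have : u (R x) - u x = (∫ y in A, F y) + ∫ y in B2, f y := by
    rw [hw, hsplit1, hsplit2, ← hsplit3]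
    ring
  rw [this]
  linarith
end
end
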